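/- Let G be a group and K a subgroup of the center of G such that every element of G can be written as k·h with k ∈ K and h in the commutator subgroup ⁅G,G⁆. Then the commutator subgroup of G is perfect: ⁅⁅G,G⁆, ⁅G,G⁆⁆ = ⁅G,G⁆. -/

import Mathlib

open scoped commutatorElement

private lemma commutatorElement_central_mul_left {G : Type*} [Group G] {z : G}
    (c : ∀ g : G, g * z = z * g) (a b : G) : ⁅z * a, b⁆ = ⁅a, b⁆ := by
  have hz : ∀ x : G, z * x * z⁻¹ = x := fun x => by rw [← c x, mul_inv_cancel_right]
  have e : ⁅z * a, b⁆ = z * (a * b * a⁻¹) * z⁻¹ * b⁻¹ := by group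
  rw [e, hz (a * b * a⁻¹)]
  group

private lemma commutatorElement_central_mul_right {G : Type*} [Group G] {z : G}
    (c : ∀ g : G, g * z = z * g) (a b : G) : ⁅a, z * b⁆ = ⁅a, b⁆ := by
  rw [← commutatorElement_inv, commutatorElement_central_mul_left c,
    commutatorElement_inv]

/-- If `G = K ⋅ ⁅G,G⁆` with `K` central, then the commutator subgroup of `G` is perfect. -/
theorem commutator_perfect_of_central_complement
    {G : Type*} [Group G] (K : Subgroup G) (hK : K ≤ Subgroup.center G)
    (hprod : ∀ g : G, ∃ k ∈ K, ∃ h ∈ commutator G, g = k * h) :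
    ⁅commutator G, commutator G⁆ = commutator G := by
  refine le_antisymm (Subgroup.commutator_le_left _ _) ?_
  rw [commutator_def, Subgroup.commutator_le]
  intro g1 _ g2 _
  obtain ⟨k1, hk1, h1, hh1, rfl⟩ := hprod g1
  obtain ⟨k2, hk2, h2, hh2, rfl⟩ := hprod g2
  have c1 := Subgroup.mem_center_iff.mp (hK hk1)
  have c2 := Subgroup.mem_center_iff.mp (hK hk2)
  rw [commutatorElement_central_mul_left c1, commutatorElement_central_mul_right c2]
  exact Subgroup.commutator_mem_commutator hh1 hh2
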